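/- Let A be a total order on a finite candidate set C and let V be a strict partial order on C. Then V can be extended to a strict total order that is single-peaked with respect to A if and only if V contains neither a u-valley nor a v-valley with respect to A. -/

import Mathlib

def VValley {C : Type*} (A V : C → C → Prop) : Prop :=
  ∃ c1 c2 c3 : C, A c1 c2 ∧ A c2 c3 ∧ V c1 c2 ∧ V c3 c2

def UValley {C : Type*} (A V : C → C → Prop) : Prop :=
  ∃ a b c d : C, a ≠ b ∧ a ≠ c ∧ a ≠ d ∧ b ≠ c ∧ b ≠ d ∧ c ≠ d ∧
    A a b ∧ A b d ∧ A a c ∧ A c d ∧ V a b ∧ V d c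

def Extends {C : Type*} (V T : C → C → Prop) : Prop :=
  ∀ x y, V x y → T x y

/-- `V` is a strict partial order: asymmetric and transitive. -/
def IsSPO {C : Type*} (V : C → C → Prop) : Prop :=
  (∀ x y, V x y → ¬ V y x) ∧ (∀ x y z, V x y → V y z → V x z)

/-- `V` is a strict weak order: a strict partial order with transitive incomparability. -/
def IsSWO {C : Type*} (V : C → C → Prop) : Prop :=
  IsSPO V ∧ ∀ x y z, (¬ V x y ∧ ¬ V y x) → (¬ V y z ∧ ¬ V z y) → (¬ V x z ∧ ¬ V z x)

/-- `V` possibly single-peaked w.r.t. axis `A`: it extends to a total order with no v-valley. -/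
def PossSP {C : Type*} (A V : C → C → Prop) : Prop :=
  ∃ T : C → C → Prop, IsStrictTotalOrder C T ∧ Extends V T ∧ ¬ VValley A T

section Aux

variable {C : Type*}

/-- Each element of the list is an `A`-minimum or `A`-maximum of its suffix. -/
def Ends (A : C → C → Prop) : List C → Prop
  | [] => True
  | e :: rest => ((∀ z ∈ rest, A e z) ∨ (∀ z ∈ rest, A z e)) ∧ Ends A rest

lemma ends_tail {A : C → C → Prop} : ∀ {L : List C}, Ends A L → Ends A L.tail
  | [], h => h
  | _ :: _, h => h.2

lemma ends_drop {A : C → C → Prop} {L : List C} (h : Ends A L) (n : ℕ) :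
    Ends A (L.drop n) := by
  induction n with
  | zero => simpa using h
  | succ n ih => rw [← List.tail_drop]; exact ends_tail ih

/-- existence of an `A`-minimum in a nonempty finset. -/
lemma exists_amin {A : C → C → Prop} (hA : IsStrictTotalOrder C A)
    (S : Finset C) (hS : S.Nonempty) : ∃ m ∈ S, ∀ x ∈ S, x ≠ m → A m x := by
  classical
  induction S using Finset.induction_on with
  | empty => exact absurd hS (by simp)
  | @insert a s ha ih =>
    rcases s.eq_empty_or_nonempty with rfl | hs
    · exact ⟨a, by simp, by simp⟩
    · obtain ⟨m, hm, hmin⟩ := ih hs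
      rcases (haveI := hA; Std.Trichotomous.rel_or_eq_or_rel_swap (r := A) (a := a) (b := m)) with hlt | rfl | hgt
      · refine ⟨a, Finset.mem_insert_self _ _, ?_⟩
        intro x hx hxa
        rcases Finset.mem_insert.1 hx with rfl | hx
        · exact absurd rfl hxa
        · by_cases hxm : x = m
          · exact hxm ▸ hlt
          · exact hA.trans _ _ _ hlt (hmin x hx hxm)
      · exact absurd hm ha
      · refine ⟨m, Finset.mem_insert_of_mem hm, ?_⟩
        intro x hx hxm
        rcases Finset.mem_insert.1 hx with rfl | hx
        · exact hgt
        · exact hmin x hx hxm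

lemma flip_sto {A : C → C → Prop} (hA : IsStrictTotalOrder C A) :
    IsStrictTotalOrder C (fun x y => A y x) where
  trichotomous a b h1 h2 := hA.trichotomous a b h2 h1
  irrefl a := hA.irrefl a
  trans a b c h1 h2 := hA.trans _ _ _ h2 h1

lemma asymA {A : C → C → Prop} (hA : IsStrictTotalOrder C A) {x y : C}
    (h : A x y) : ¬ A y x := fun h' => hA.irrefl x (hA.trans _ _ _ h h')

/-- Key combinatorial lemma: in any nonempty finset there is an element which is an
`A`-endpoint and which beats nothing else, provided there are no valleys. -/
lemma exists_endpoint {A V : C → C → Prop} (hA : IsStrictTotalOrder C A) (hV : IsSPO V)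
    (hU : ¬ UValley A V) (hVV : ¬ VValley A V) (S : Finset C) (hS : S.Nonempty) :
    ∃ e ∈ S, ((∀ z ∈ S, z ≠ e → A e z) ∨ (∀ z ∈ S, z ≠ e → A z e)) ∧
      (∀ z ∈ S, z ≠ e → ¬ V e z) := by
  obtain ⟨l, hl, hlmin⟩ := exists_amin hA S hS
  obtain ⟨r, hr, hrmax'⟩ := exists_amin (flip_sto hA) S hS
  have hrmax : ∀ x ∈ S, x ≠ r → A x r := hrmax'
  by_contra hcon
  push_neg at hcon
  obtain ⟨x, hx, hxl, hlx⟩ := (hcon l hl (Or.inl hlmin))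
  obtain ⟨y, hy, hyr, hry⟩ := (hcon r hr (Or.inr hrmax))
  -- A basic facts
  have hAlx : A l x := hlmin x hx hxl
  have hAyr : A y r := hrmax y hy hyr
  by_cases hxy : x = y
  · subst hxy
    -- v-valley (l, x, r)
    exact hVV ⟨l, x, r, hAlx, hAyr, hlx, hry⟩
  · by_cases hxr : x = r
    · have hVlr : V l r := hxr ▸ hlx
      by_cases hyl : y = l
      · exact hV.1 _ _ hVlr (hyl ▸ hry)
      · have hAly : A l y := hlmin y hy hyl
        exact hVV ⟨l, y, r, hAly, hAyr, hV.2 _ _ _ hVlr hry, hry⟩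
    · by_cases hyl : y = l
      · have hVrl : V r l := hyl ▸ hry
        have hAxr : A x r := hrmax x hx hxr
        exact hVV ⟨l, x, r, hAlx, hAxr, hlx, hV.2 _ _ _ hVrl hlx⟩
      · -- u-valley (l, x, y, r)
        have hAxr : A x r := hrmax x hx hxr
        have hAly : A l y := hlmin y hy hyl
        have hlr : l ≠ r := fun h => asymA hA hAlx (h ▸ hAxr)
        exact hU ⟨l, x, y, r, (Ne.symm hxl), (fun h => hyl h.symm), hlr, hxy, hxr,
          hyr, hAlx, hAxr, hAly, hAyr, hlx, hry⟩

/-- Build the removal sequence. -/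
lemma build {A V : C → C → Prop} (hA : IsStrictTotalOrder C A) (hV : IsSPO V)
    (hU : ¬ UValley A V) (hVV : ¬ VValley A V) :
    ∀ S : Finset C, ∃ L : List C, L.Nodup ∧ (∀ x, x ∈ L ↔ x ∈ S) ∧
      L.Pairwise (fun a b => ¬ V a b) ∧ Ends A L := by
  classical
  intro S
  induction S using Finset.strongInduction with
  | _ S ih =>
    rcases S.eq_empty_or_nonempty with rfl | hS
    · exact ⟨[], by simp, by simp, by simp, trivial⟩
    · obtain ⟨e, heS, hend, hbeat⟩ := exists_endpoint hA hV hU hVV S hS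
      obtain ⟨L', hnd, hmem, hpw, hends⟩ := ih (S.erase e) (Finset.erase_ssubset heS)
      refine ⟨e :: L', ?_, ?_, ?_, ?_⟩
      · refine List.nodup_cons.2 ⟨fun h => ?_, hnd⟩
        exact (Finset.ne_of_mem_erase ((hmem e).1 h)) rfl
      · intro x
        simp only [List.mem_cons, hmem, Finset.mem_erase]
        constructor
        · rintro (rfl | ⟨_, h⟩)
          · exact heS
          · exact h
        · intro hxS
          by_cases hxe : x = e
          · exact Or.inl hxe
          · exact Or.inr ⟨hxe, hxS⟩
      · refine List.pairwise_cons.2 ⟨fun z hz => ?_, hpw⟩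
        have := (hmem z).1 hz
        exact hbeat z (Finset.mem_of_mem_erase this) (Finset.ne_of_mem_erase this)
      · refine ⟨?_, hends⟩
        rcases hend with h | h
        · exact Or.inl fun z hz =>
            h z (Finset.mem_of_mem_erase ((hmem z).1 hz)) (Finset.ne_of_mem_erase ((hmem z).1 hz))
        · exact Or.inr fun z hz =>
            h z (Finset.mem_of_mem_erase ((hmem z).1 hz)) (Finset.ne_of_mem_erase ((hmem z).1 hz))

lemma ends_getElem {A : C → C → Prop} {L : List C} (h : Ends A L)
    {i j : ℕ} (hj : j < L.length) (hij : i < j) :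
    (∀ k, (hk : k < L.length) → i < k → A L[i] L[k]) ∨
    (∀ k, (hk : k < L.length) → i < k → A L[k] L[i]) := by
  have hi : i < L.length := lt_trans hij hj
  have hd : Ends A (L.drop i) := ends_drop h i
  rw [List.drop_eq_getElem_cons hi] at hd
  have key := hd.1
  have hget : ∀ k, (hk : k < L.length) → i < k → L[k] ∈ L.drop (i + 1) := by
    intro k hk hik
    have h1 : k - (i+1) < (L.drop (i+1)).length := by
      rw [List.length_drop]; omega
    have : (L.drop (i+1))[k - (i+1)] = L[k] := by
      rw [List.getElem_drop]
      congr 1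
      omega
    rw [← this]
    exact List.getElem_mem h1
  rcases key with hmin | hmax
  · exact Or.inl fun k hk hik => hmin _ (hget k hk hik)
  · exact Or.inr fun k hk hik => hmax _ (hget k hk hik)

end Aux

theorem stmt3 {C : Type*} [Fintype C] (A V : C → C → Prop)
    (hA : IsStrictTotalOrder C A) (hV : IsSPO V) :
    (∃ T : C → C → Prop, IsStrictTotalOrder C T ∧ Extends V T ∧ ¬ VValley A T) ↔
      (¬ UValley A V ∧ ¬ VValley A V) := by
  classical
  constructor
  · rintro ⟨T, hT, hext, hvv⟩
    have asymT : ∀ {x y : C}, T x y → ¬ T y x :=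
      fun {x y} h h' => hT.irrefl x (hT.trans _ _ _ h h')
    constructor
    · rintro ⟨a, b, c, d, hab, hac, had, hbc, hbd, hcd, Aab, Abd, Aac, Acd, Vab, Vdc⟩
      have Tab : T a b := hext _ _ Vab
      have Tdc : T d c := hext _ _ Vdc
      rcases (haveI := hA; Std.Trichotomous.rel_or_eq_or_rel_swap (r := A) (a := b) (b := c)) with hAbc | rfl | hAcb
      · -- b left of c : valleys (a,b,c) or (b,c,d)
        rcases (haveI := hT; Std.Trichotomous.rel_or_eq_or_rel_swap (r := T) (a := b) (b := c)) with hTbc | rfl | hTcb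
        · exact hvv ⟨b, c, d, hAbc, Acd, hTbc, Tdc⟩
        · exact hbc rfl
        · exact hvv ⟨a, b, c, Aab, hAbc, Tab, hTcb⟩
      · exact hbc rfl
      · -- c left of b
        rcases (haveI := hT; Std.Trichotomous.rel_or_eq_or_rel_swap (r := T) (a := b) (b := c)) with hTbc | rfl | hTcb
        · rcases (haveI := hT; Std.Trichotomous.rel_or_eq_or_rel_swap (r := T) (a := a) (b := c)) with hTac | rfl | hTca
          · exact hvv ⟨a, c, b, Aac, hAcb, hTac, hTbc⟩
          · exact hac rfl
          · exact asymT hTca (hT.trans _ _ _ Tab hTbc)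
        · exact hbc rfl
        · rcases (haveI := hT; Std.Trichotomous.rel_or_eq_or_rel_swap (r := T) (a := d) (b := b)) with hTdb | rfl | hTbd
          · exact hvv ⟨c, b, d, hAcb, Abd, hTcb, hTdb⟩
          · exact hbd rfl
          · exact asymT hTbd (hT.trans _ _ _ Tdc hTcb)
    · rintro ⟨c1, c2, c3, h12, h23, v12, v32⟩
      exact hvv ⟨c1, c2, c3, h12, h23, hext _ _ v12, hext _ _ v32⟩
  · rintro ⟨hU, hVV⟩
    obtain ⟨L, hnd, hmem, hpw, hends⟩ := build hA hV hU hVV (Finset.univ : Finset C)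
    have hmemL : ∀ x : C, x ∈ L := fun x => (hmem x).2 (Finset.mem_univ x)
    set idx : C → ℕ := fun x => L.idxOf x with hidx
    have hlt : ∀ x : C, idx x < L.length := fun x => List.idxOf_lt_length_iff.2 (hmemL x)
    have hgetidx : ∀ x : C, L[idx x]'(hlt x) = x := fun x => List.getElem_idxOf (hlt x)
    have hinj : ∀ x y : C, idx x = idx y → x = y := by
      intro x y h
      exact (List.idxOf_inj (hmemL x)).1 h
    refine ⟨fun x y => idx y < idx x, ?_, ?_, ?_⟩
    · exact
        { trichotomous := fun a b h1 h2 => hinj a b (by omega)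
          irrefl := fun a h => lt_irrefl _ h
          trans := fun a b c h1 h2 => lt_trans h2 h1 }
    · -- extends
      intro x y hxy
      have hne : x ≠ y := fun h => hV.1 _ _ hxy (h ▸ hxy)
      rcases Nat.lt_trichotomy (idx x) (idx y) with h | h | h
      · exfalso
        have := List.pairwise_iff_getElem.1 hpw (idx x) (idx y) (hlt x) (hlt y) h
        rw [hgetidx x, hgetidx y] at this
        exact this hxy
      · exact absurd (hinj _ _ h) hne
      · exact h
    · -- no v-valley
      rintro ⟨c1, c2, c3, A12, A23, T12, T32⟩
      rcases ends_getElem hends (hlt c1) T12 with h | h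
      · have := h (idx c1) (hlt c1) T12
        rw [hgetidx c2, hgetidx c1] at this
        exact hA.irrefl c1 (hA.trans _ _ _ A12 this)
      · have := h (idx c3) (hlt c3) T32
        rw [hgetidx c2, hgetidx c3] at this
        exact hA.irrefl c2 (hA.trans _ _ _ A23 this)
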